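/- Assume 0 < μ < 1/L_f, 0 < β < 2, and ρ > 0. Consider the LCDC-ALM iterates: given x⁰, z⁰ ∈ ℝⁿ and λ⁰ ∈ ℝ^m, for each k ≥ 0 let x^{k+1} be the unique minimizer of x ↦ ⟨∇f(x^k), x − x^k⟩ + ⟨λ^k, Ax − b⟩ + (ρ/2)‖Ax − b‖² + ‖x − z^k‖²/(2μ), let x_{μg}(z^k) be the proximal point of g at z^k, and set z^{k+1} = z^k + β(x^{k+1} − x_{μg}(z^k)) and λ^{k+1} = λ^k + ρ(Ax^{k+1} − b). Then for all k ≥ 0, ψ(x^k, z^k, λ^k) − ψ(x^{k+1}, z^{k+1}, λ^{k+1}) ≥ ((μ^{-1} − L_f)/2)‖x^{k+1} − x^k‖² + (1/μ)(1/β − 1/2)‖z^{k+1} − z^k‖² − (1/ρ)‖λ^{k+1} − λ^k‖². -/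

import Mathlib

open scoped RealInnerProductSpace

noncomputable section

/-- `ℝⁿ` with the Euclidean norm. -/
abbrev En (n : ℕ) := EuclideanSpace ℝ (Fin n)

/-- Real-valued Moreau envelope/proximal map of the convex function `g`. -/
def IsMoreauR {n : ℕ} (g : En n → ℝ) (μ : ℝ) (Mg : En n → ℝ) (xg : En n → En n) : Prop :=
  ∀ z : En n,
    Mg z = g (xg z) + ‖xg z - z‖ ^ 2 / (2 * μ) ∧
    (∀ x, Mg z ≤ g x + ‖x - z‖ ^ 2 / (2 * μ)) ∧
    (∀ x, g x + ‖x - z‖ ^ 2 / (2 * μ) = Mg z → x = xg z)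

/-- The smoothed proximal augmented Lagrangian
`ψ(x,z,λ) = f(x) + ⟨λ, Ax−b⟩ + (ρ/2)‖Ax−b‖² + ‖x−z‖²/(2μ) − M_{μg}(z)`. -/
def psiAL {n m : ℕ} (f : En n → ℝ) (Mg : En n → ℝ) (A : En n →L[ℝ] En m) (b : En m)
    (μ ρ : ℝ) (x z : En n) (lam : En m) : ℝ :=
  f x + ⟪lam, A x - b⟫ + (ρ / 2) * ‖A x - b‖ ^ 2 + ‖x - z‖ ^ 2 / (2 * μ) - Mg z

lemma descent_lemma {n : ℕ} (f : En n → ℝ) (f' : En n → En n) (Lf : ℝ) (hLf : 0 ≤ Lf)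
    (hfdiff : ∀ x, HasGradientAt f (f' x) x)
    (hfLip : ∀ x y : En n, ‖f' x - f' y‖ ≤ Lf * ‖x - y‖) (x y : En n) :
    f y ≤ f x + ⟪f' x, y - x⟫ + Lf / 2 * ‖y - x‖ ^ 2 := by
  set v := y - x with hv
  have hline : ∀ t : ℝ, HasDerivAt (fun t : ℝ => f (x + t • v)) ⟪f' (x + t • v), v⟫ t := by
    intro t
    have h1 : HasFDerivAt f (InnerProductSpace.toDual ℝ _ (f' (x + t • v))) (x + t • v) :=
      (hasGradientAt_iff_hasFDerivAt.mp (hfdiff _))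
    have h2 : HasDerivAt (fun s : ℝ => x + s • v) v t := by
      simpa using ((hasDerivAt_id t).smul_const v).const_add x
    have h3 := h1.comp_hasDerivAt t h2
    simp at h3
    exact h3
  set φ : ℝ → ℝ := fun t => f (x + t • v) - t * ⟪f' x, v⟫ - t ^ 2 * (Lf / 2 * ‖v‖ ^ 2) with hφ
  have hphi : ∀ t : ℝ, HasDerivAt φ
      (⟪f' (x + t • v), v⟫ - ⟪f' x, v⟫ - t * (Lf * ‖v‖ ^ 2)) t := by
    intro t
    have h3 : HasDerivAt (fun t : ℝ => t * ⟪f' x, v⟫) ⟪f' x, v⟫ t := by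
      simpa using (hasDerivAt_id t).mul_const ⟪f' x, v⟫
    have h4 : HasDerivAt (fun t : ℝ => t ^ 2 * (Lf / 2 * ‖v‖ ^ 2))
        (2 * t * (Lf / 2 * ‖v‖ ^ 2)) t := by
      simpa using (hasDerivAt_pow 2 t).mul_const (Lf / 2 * ‖v‖ ^ 2)
    have := ((hline t).sub h3).sub h4
    rw [show t * (Lf * ‖v‖ ^ 2) = 2 * t * (Lf / 2 * ‖v‖ ^ 2) by ring]
    exact this
  have hanti : AntitoneOn φ (Set.Icc (0:ℝ) 1) := by
    apply antitoneOn_of_deriv_nonpos (convex_Icc 0 1)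
    · exact fun t _ => ((hphi t).continuousAt).continuousWithinAt
    · exact fun t _ => ((hphi t).differentiableAt).differentiableWithinAt
    · intro t ht
      rw [interior_Icc] at ht
      rw [(hphi t).deriv]
      have h5 : ⟪f' (x + t • v) - f' x, v⟫ ≤ ‖f' (x + t • v) - f' x‖ * ‖v‖ :=
        real_inner_le_norm _ _
      have h6 : ‖f' (x + t • v) - f' x‖ ≤ Lf * ‖t • v‖ := by
        simpa using hfLip (x + t • v) x
      have h7 : ‖t • v‖ = t * ‖v‖ := by
        rw [norm_smul, Real.norm_eq_abs, abs_of_pos ht.1]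
      rw [inner_sub_left] at h5
      rw [h7] at h6
      have hvn : (0:ℝ) ≤ ‖v‖ := norm_nonneg v
      nlinarith [mul_le_mul_of_nonneg_right h6 hvn, norm_nonneg (f' (x + t • v) - f' x), sq_nonneg ‖v‖]
  have h01 := hanti (Set.mem_Icc.mpr ⟨le_refl 0, zero_le_one⟩)
      (Set.mem_Icc.mpr ⟨zero_le_one, le_refl 1⟩) zero_le_one
  have e0 : φ 0 = f x := by simp [hφ]
  have e1 : φ 1 = f y - ⟪f' x, v⟫ - Lf / 2 * ‖v‖ ^ 2 := by
    simp [hφ, hv]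
  rw [e0, e1] at h01
  linarith

lemma prox_subgrad {n : ℕ} (g : En n → ℝ) (hg : ConvexOn ℝ Set.univ g)
    (μ : ℝ) (hμ0 : 0 < μ) (Mg : En n → ℝ) (xg : En n → En n)
    (hgprox : IsMoreauR g μ Mg xg) (z v : En n) :
    g (xg z) + ⟪z - xg z, v - xg z⟫ / μ ≤ g v := by
  obtain ⟨heq, hmin, -⟩ := hgprox z
  set u := xg z with hu
  -- for each t ∈ (0,1], a basic inequality
  have key : ∀ t : ℝ, 0 < t → t ≤ 1 →
      0 ≤ g v - g u + ⟪u - z, v - u⟫ / μ + t * (‖v - u‖ ^ 2 / (2 * μ)) := by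
    intro t ht0 ht1
    have hcvx := hg.2 (Set.mem_univ u) (Set.mem_univ v) (by linarith : (0:ℝ) ≤ 1 - t)
      (le_of_lt ht0) (by ring)
    simp only [smul_eq_mul] at hcvx
    have hpt : Mg z ≤ g ((1 - t) • u + t • v) + ‖(1 - t) • u + t • v - z‖ ^ 2 / (2 * μ) :=
      hmin _
    have hns : ((1 : ℝ) - t) • u + t • v - z = (u - z) + t • (v - u) := by
      module
    have hexp : ‖(1 - t) • u + t • v - z‖ ^ 2
        = ‖u - z‖ ^ 2 + 2 * (t * ⟪u - z, v - u⟫) + t ^ 2 * ‖v - u‖ ^ 2 := by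
      rw [hns, norm_add_sq_real, real_inner_smul_right, norm_smul, Real.norm_eq_abs,
        abs_of_pos ht0, mul_pow]
    rw [heq, hexp] at hpt
    have h2μ : 0 < 2 * μ := by linarith
    have := hpt.trans (by linarith [hcvx] : g ((1 - t) • u + t • v) +
      (‖u - z‖ ^ 2 + 2 * (t * ⟪u - z, v - u⟫) + t ^ 2 * ‖v - u‖ ^ 2) / (2 * μ)
        ≤ (1 - t) * g u + t * g v +
      (‖u - z‖ ^ 2 + 2 * (t * ⟪u - z, v - u⟫) + t ^ 2 * ‖v - u‖ ^ 2) / (2 * μ))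
    -- this : g u + ‖u-z‖²/(2μ) ≤ (1-t) g u + t g v + (...)/(2μ)
    have hdiv : 0 ≤ t * (g v - g u) + (2 * (t * ⟪u - z, v - u⟫) + t ^ 2 * ‖v - u‖ ^ 2) / (2 * μ) := by
      have h1 : ‖xg z - z‖ = ‖u - z‖ := by rw [hu]
      rw [h1] at this
      have hsplit : (‖u - z‖ ^ 2 + 2 * (t * ⟪u - z, v - u⟫) + t ^ 2 * ‖v - u‖ ^ 2) / (2 * μ)
          = ‖u - z‖ ^ 2 / (2 * μ) + (2 * (t * ⟪u - z, v - u⟫) + t ^ 2 * ‖v - u‖ ^ 2) / (2 * μ) := by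
        ring
      rw [hsplit] at this
      linarith
    have hring : t * (g v - g u) + (2 * (t * ⟪u - z, v - u⟫) + t ^ 2 * ‖v - u‖ ^ 2) / (2 * μ)
        = t * (g v - g u + ⟪u - z, v - u⟫ / μ + t * (‖v - u‖ ^ 2 / (2 * μ))) := by
      field_simp
      ring
    rw [hring] at hdiv
    exact nonneg_of_mul_nonneg_right hdiv ht0
  -- take t → 0
  have main : 0 ≤ g v - g u + ⟪u - z, v - u⟫ / μ := by
    by_contra hcon
    push_neg at hcon
    set a := g v - g u + ⟪u - z, v - u⟫ / μ
    set K := ‖v - u‖ ^ 2 / (2 * μ) with hK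
    have hK0 : 0 ≤ K := by positivity
    rcases eq_or_lt_of_le hK0 with hK1 | hK1
    · have := key 1 one_pos le_rfl
      rw [← hK1] at this; linarith
    · have htpos : 0 < -a / (2 * K) := div_pos (by linarith) (by linarith)
      have := key (min 1 (-a / (2 * K))) (lt_min one_pos htpos) (min_le_left _ _)
      have hle : min 1 (-a / (2 * K)) * K ≤ (-a / (2 * K)) * K :=
        mul_le_mul_of_nonneg_right (min_le_right _ _) hK0
      have : (-a / (2 * K)) * K = -a / 2 := by field_simp
      nlinarith [min_le_right 1 (-a / (2 * K)), mul_le_mul_of_nonneg_right (min_le_right 1 (-a / (2*K))) hK0]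
  have hflip : ⟪z - u, v - u⟫ = -⟪u - z, v - u⟫ := by
    rw [show z - u = -(u - z) by abel, inner_neg_left]
  have hflip2 : ⟪z - u, v - u⟫ / μ = -(⟪u - z, v - u⟫ / μ) := by rw [hflip]; ring
  linarith [main]

lemma moreau_grad {n : ℕ} (g : En n → ℝ) (hg : ConvexOn ℝ Set.univ g)
    (μ : ℝ) (hμ0 : 0 < μ) (Mg : En n → ℝ) (xg : En n → En n)
    (hgprox : IsMoreauR g μ Mg xg) (z z' : En n) :
    ⟪z - xg z, z' - z⟫ / μ ≤ Mg z' - Mg z := by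
  obtain ⟨heq, -, -⟩ := hgprox z
  obtain ⟨heq', -, -⟩ := hgprox z'
  set u := xg z with hu
  set u' := xg z' with hu'
  have hsub := prox_subgrad g hg μ hμ0 Mg xg hgprox z u'
  have hid : ⟪z - u, u' - u⟫ = ⟪z - u, z' - z⟫ + (-⟪u - z, u' - z'⟫) + ‖u - z‖ ^ 2 := by
    have h1 : (u' - u) = (z' - z) + ((u' - z') + (z - u)) := by abel
    have e1 : ⟪z - u, u' - z'⟫ = -⟪u - z, u' - z'⟫ := by
      rw [show z - u = -(u - z) from by abel, inner_neg_left]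
    have e2 : ⟪z - u, z - u⟫ = ‖u - z‖ ^ 2 := by
      rw [real_inner_self_eq_norm_sq, show z - u = -(u - z) from by abel, norm_neg]
    rw [h1, inner_add_right, inner_add_right, e1, e2]; ring
  have hexp : ‖(u - z) - (u' - z')‖ ^ 2
      = ‖u - z‖ ^ 2 - 2 * ⟪u - z, u' - z'⟫ + ‖u' - z'‖ ^ 2 := norm_sub_sq_real _ _
  have hsq : (0:ℝ) ≤ ‖(u - z) - (u' - z')‖ ^ 2 := sq_nonneg _
  have hS : 0 ≤ 2 * ⟪z - u, u' - u⟫ + ‖u' - z'‖ ^ 2 - ‖u - z‖ ^ 2 - 2 * ⟪z - u, z' - z⟫ := by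
    rw [hid]; rw [hexp] at hsq; linarith
  have h2μ : (0:ℝ) < 2 * μ := by linarith
  have key : ⟪z - u, z' - z⟫ / μ +
      (2 * ⟪z - u, u' - u⟫ + ‖u' - z'‖ ^ 2 - ‖u - z‖ ^ 2 - 2 * ⟪z - u, z' - z⟫) / (2 * μ)
      = ⟪z - u, u' - u⟫ / μ + ‖u' - z'‖ ^ 2 / (2 * μ) - ‖u - z‖ ^ 2 / (2 * μ) := by
    field_simp
    ring
  have hnn : 0 ≤ (2 * ⟪z - u, u' - u⟫ + ‖u' - z'‖ ^ 2 - ‖u - z‖ ^ 2 - 2 * ⟪z - u, z' - z⟫)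
      / (2 * μ) := div_nonneg hS (le_of_lt h2μ)
  rw [heq, heq']
  have hn1 : ‖u' - z'‖ = ‖xg z' - z'‖ := by rw [hu']
  have hn2 : ‖u - z‖ = ‖xg z - z‖ := by rw [hu]
  rw [← hn1, ← hn2]
  linarith [hsub]

lemma xstep {n m : ℕ} (A : En n →L[ℝ] En m) (b : En m) (gk : En n) (lk : En m)
    (μ ρ : ℝ) (hμ0 : 0 < μ) (hρ : 0 ≤ ρ) (xk zk u : En n)
    (hmin : ∀ w : En n, ⟪gk, u - xk⟫ + ⟪lk, A u - b⟫ + (ρ/2)*‖A u - b‖^2 + ‖u - zk‖^2/(2*μ)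
       ≤ ⟪gk, w - xk⟫ + ⟪lk, A w - b⟫ + (ρ/2)*‖A w - b‖^2 + ‖w - zk‖^2/(2*μ)) :
    ⟪gk, u - xk⟫ + ⟪lk, A u - b⟫ + (ρ/2)*‖A u - b‖^2 + ‖u - zk‖^2/(2*μ) + ‖xk - u‖^2/(2*μ)
      ≤ ⟪lk, A xk - b⟫ + (ρ/2)*‖A xk - b‖^2 + ‖xk - zk‖^2/(2*μ) := by
  set d := xk - u with hd
  set aa := ⟪gk, d⟫ + ⟪lk, A d⟫ + ρ * ⟪A u - b, A d⟫ + ⟪u - zk, d⟫ / μ with haadef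
  set bb := ρ/2 * ‖A d‖^2 + ‖d‖^2/(2*μ) with hbbdef
  clear_value aa bb
  have expand : ∀ t : ℝ,
      ⟪gk, (u + t • d) - xk⟫ + ⟪lk, A (u + t • d) - b⟫ + (ρ/2)*‖A (u + t • d) - b‖^2
        + ‖(u + t • d) - zk‖^2/(2*μ)
      = (⟪gk, u - xk⟫ + ⟪lk, A u - b⟫ + (ρ/2)*‖A u - b‖^2 + ‖u - zk‖^2/(2*μ))
        + t * aa + t^2 * bb := by
    intro t
    have e1 : (u + t • d) - xk = (u - xk) + t • d := by abel
    have e2 : A (u + t • d) - b = (A u - b) + t • (A d) := by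
      rw [map_add, map_smul]; abel
    have e3 : (u + t • d) - zk = (u - zk) + t • d := by abel
    rw [e1, e2, e3, inner_add_right, inner_add_right, real_inner_smul_right,
      real_inner_smul_right, norm_add_sq_real, norm_add_sq_real,
      real_inner_smul_right, real_inner_smul_right, norm_smul, norm_smul,
      Real.norm_eq_abs, mul_pow, mul_pow, sq_abs, haadef, hbbdef]
    field_simp
    ring
  have h0 : ∀ t : ℝ, 0 ≤ t * aa + t^2 * bb := by
    intro t
    have := hmin (u + t • d)
    rw [expand t] at this
    linarith
  have hbb : ‖d‖^2/(2*μ) ≤ bb := by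
    have : 0 ≤ ρ/2 * ‖A d‖^2 := by positivity
    rw [hbbdef]; linarith
  have hbb0 : 0 ≤ bb := le_trans (by positivity) hbb
  have haa : 0 ≤ aa := by
    by_contra hc
    push_neg at hc
    rcases eq_or_lt_of_le hbb0 with h | h
    · have := h0 1
      nlinarith
    · have ht := h0 (-aa/(2*bb))
      have he : (-aa/(2*bb))*aa + (-aa/(2*bb))^2*bb = -(aa^2/(4*bb)) := by
        field_simp; ring
      rw [he] at ht
      have haa2 : 0 < aa^2 := by nlinarith
      have := div_pos haa2 (by linarith : (0:ℝ) < 4*bb)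
      linarith
  have hx1 := expand 1
  have hxk : u + (1:ℝ) • d = xk := by rw [one_smul, hd]; abel
  rw [hxk] at hx1
  have hzero : ⟪gk, xk - xk⟫ = (0:ℝ) := by simp
  rw [hzero] at hx1
  linarith [hx1, haa, hbb]

lemma zstep {n : ℕ} (g : En n → ℝ) (hg : ConvexOn ℝ Set.univ g)
    (μ β : ℝ) (hμ0 : 0 < μ) (hβ0 : 0 < β) (Mg : En n → ℝ) (xg : En n → En n)
    (hgprox : IsMoreauR g μ Mg xg) (x' zk z' : En n)
    (hz' : z' = zk + β • (x' - xg zk)) :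
    (1/μ) * (1/β - 1/2) * ‖z' - zk‖^2 + (‖x' - z'‖^2/(2*μ) - Mg z')
      ≤ ‖x' - zk‖^2/(2*μ) - Mg zk := by
  set p := x' - xg zk with hp
  have hd : z' - zk = β • p := by rw [hz']; abel
  have hM := moreau_grad g hg μ hμ0 Mg xg hgprox zk z'
  rw [hd] at hM
  have h1 : ⟪zk - xg zk, β • p⟫ = β * ⟪zk - xg zk, p⟫ := real_inner_smul_right _ _ _
  rw [h1] at hM
  have h2 : ‖β • p‖^2 = β^2 * ‖p‖^2 := by
    rw [norm_smul, Real.norm_eq_abs, mul_pow, sq_abs]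
  have h3 : x' - z' = (x' - zk) - β • p := by rw [hz']; abel
  have h4 : ‖(x' - zk) - β • p‖^2
      = ‖x' - zk‖^2 - 2*(β*⟪x' - zk, p⟫) + β^2*‖p‖^2 := by
    rw [norm_sub_sq_real, real_inner_smul_right, h2]
  have h5 : ⟪zk - xg zk, p⟫ = ‖p‖^2 - ⟪x' - zk, p⟫ := by
    have : ⟪zk - xg zk, p⟫ + ⟪x' - zk, p⟫ = ‖p‖^2 := by
      rw [← inner_add_left, show zk - xg zk + (x' - zk) = p from by rw [hp]; abel,
        real_inner_self_eq_norm_sq]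
    linarith
  rw [h5] at hM
  rw [hd, h2, h3, h4]
  have key : (1/μ) * (1/β - 1/2) * (β^2*‖p‖^2)
      + (‖x' - zk‖^2 - 2*(β*⟪x' - zk, p⟫) + β^2*‖p‖^2)/(2*μ) - ‖x' - zk‖^2/(2*μ)
      = β * (‖p‖^2 - ⟪x' - zk, p⟫) / μ := by
    field_simp
    ring
  linarith [hM, key]

/-- descent property of the smoothed proximal augmented Lagrangian
along the LCDC-ALM iterates (Algorithm 2). -/
theorem stmt17 {n m : ℕ} (f : En n → ℝ) (f' : En n → En n) (Lf : ℝ) (hLf : 0 < Lf)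
    (hfdiff : ∀ x, HasGradientAt f (f' x) x)
    (hfLip : ∀ x y : En n, ‖f' x - f' y‖ ≤ Lf * ‖x - y‖)
    (g : En n → ℝ) (hg : ConvexOn ℝ Set.univ g)
    (A : En n →L[ℝ] En m) (b : En m)
    (μ β ρ : ℝ) (hμ0 : 0 < μ) (hμ1 : μ < 1 / Lf) (hβ0 : 0 < β) (hβ2 : β < 2) (hρ : 0 < ρ)
    (Mg : En n → ℝ) (xg : En n → En n) (hgprox : IsMoreauR g μ Mg xg)
    (x z : ℕ → En n) (lam : ℕ → En m)
    (hx : ∀ k : ℕ, ∀ w : En n,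
      ⟪f' (x k), x (k + 1) - x k⟫ + ⟪lam k, A (x (k + 1)) - b⟫ +
          (ρ / 2) * ‖A (x (k + 1)) - b‖ ^ 2 + ‖x (k + 1) - z k‖ ^ 2 / (2 * μ) ≤
        ⟪f' (x k), w - x k⟫ + ⟪lam k, A w - b⟫ +
          (ρ / 2) * ‖A w - b‖ ^ 2 + ‖w - z k‖ ^ 2 / (2 * μ))
    (hz : ∀ k : ℕ, z (k + 1) = z k + β • (x (k + 1) - xg (z k)))
    (hlam : ∀ k : ℕ, lam (k + 1) = lam k + ρ • (A (x (k + 1)) - b)) :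
    ∀ k : ℕ,
      (μ⁻¹ - Lf) / 2 * ‖x (k + 1) - x k‖ ^ 2 +
          (1 / μ) * (1 / β - 1 / 2) * ‖z (k + 1) - z k‖ ^ 2 -
          (1 / ρ) * ‖lam (k + 1) - lam k‖ ^ 2 ≤
        psiAL f Mg A b μ ρ (x k) (z k) (lam k) -
          psiAL f Mg A b μ ρ (x (k + 1)) (z (k + 1)) (lam (k + 1)) := by
  intro k
  have hD1 := descent_lemma f f' Lf hLf.le hfdiff hfLip (x k) (x (k+1))
  have hQ := xstep A b (f' (x k)) (lam k) μ ρ hμ0 hρ.le (x k) (z k) (x (k+1)) (hx k)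
  have hD2 := zstep g hg μ β hμ0 hβ0 Mg xg hgprox (x (k+1)) (z k) (z (k+1)) (hz k)
  have hl := hlam k
  have hL1 : ⟪lam (k+1), A (x (k+1)) - b⟫
      = ⟪lam k, A (x (k+1)) - b⟫ + ρ * ‖A (x (k+1)) - b‖^2 := by
    rw [hl, inner_add_left, real_inner_smul_left, real_inner_self_eq_norm_sq]
  have hL2 : lam (k+1) - lam k = ρ • (A (x (k+1)) - b) := by rw [hl]; abel
  have hL3 : (1/ρ) * ‖lam (k+1) - lam k‖^2 = ρ * ‖A (x (k+1)) - b‖^2 := by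
    rw [hL2, norm_smul, Real.norm_eq_abs, mul_pow, sq_abs]
    field_simp
  have hnorm2 : ‖x k - x (k+1)‖^2/(2*μ) = ‖x (k+1) - x k‖^2/(2*μ) := by
    rw [norm_sub_rev]
  have hcoef : (μ⁻¹ - Lf)/2 * ‖x (k+1) - x k‖^2
      = ‖x (k+1) - x k‖^2/(2*μ) - Lf/2 * ‖x (k+1) - x k‖^2 := by
    field_simp
  simp only [psiAL]
  linarith [hD1, hQ, hD2, hL1, hL3, hnorm2, hcoef]
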